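/- Let γ ∈ ℝ, s ∈ (0,1), and ã(v,η) = ⟨v⟩^γ (1 + |η|² + |v∧η|² + |v|²)^s. Then ã is slowly varying: there exists δ > 0 and C ≥ 1 such that for all X, Y ∈ ℝ⁶ with |X−Y| ≤ δ, C^{-1} ã(Y) ≤ ã(X) ≤ C ã(Y). -/

import Mathlib

/-- Cross product of two vectors in `ℝ³` (as `EuclideanSpace ℝ (Fin 3)`). -/
noncomputable def cross (v w : EuclideanSpace ℝ (Fin 3)) : EuclideanSpace ℝ (Fin 3) :=
  WithLp.toLp 2 fun i => ![v 1 * w 2 - v 2 * w 1, v 2 * w 0 - v 0 * w 2, v 0 * w 1 - v 1 * w 0] i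

/-- The weight `ã(v,η) = ⟨v⟩^γ (1+|η|²+|v∧η|²+|v|²)^s`. -/
noncomputable def atilde (γ s : ℝ) (v η : EuclideanSpace ℝ (Fin 3)) : ℝ :=
  (1 + ‖v‖ ^ 2) ^ (γ / 2) * (1 + ‖η‖ ^ 2 + ‖cross v η‖ ^ 2 + ‖v‖ ^ 2) ^ s

lemma norm_sq_eq3 (x : EuclideanSpace ℝ (Fin 3)) : ‖x‖ ^ 2 = x 0 ^ 2 + x 1 ^ 2 + x 2 ^ 2 := by
  rw [EuclideanSpace.norm_eq, Real.sq_sqrt (by positivity)]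
  simp [Fin.sum_univ_three, Real.norm_eq_abs, sq_abs]

lemma crossApply3 (v w : EuclideanSpace ℝ (Fin 3)) :
    cross v w 0 = v 1 * w 2 - v 2 * w 1 ∧ cross v w 1 = v 2 * w 0 - v 0 * w 2 ∧
    cross v w 2 = v 0 * w 1 - v 1 * w 0 := by
  refine ⟨rfl, rfl, rfl⟩

lemma cross_norm_le (u w : EuclideanSpace ℝ (Fin 3)) : ‖cross u w‖ ≤ ‖u‖ * ‖w‖ := by
  have h := norm_sq_eq3 (cross u w)
  have hu := norm_sq_eq3 u
  have hw := norm_sq_eq3 w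
  obtain ⟨h0, h1, h2⟩ := crossApply3 u w
  refine le_of_pow_le_pow_left₀ two_ne_zero (by positivity) ?_
  rw [mul_pow, h, hu, hw, h0, h1, h2]
  nlinarith [sq_nonneg (u 0 * w 0 + u 1 * w 1 + u 2 * w 2)]

lemma cross_decomp (v η v' η' : EuclideanSpace ℝ (Fin 3)) :
    cross v η = cross v' η' + cross (v - v') η + cross v' (η - η') := by
  ext i
  fin_cases i <;>
    simp [cross, PiLp.sub_apply, PiLp.add_apply] <;> ring

lemma sq_sum_bound {a b c a' b' c' : ℝ} (ha' : 0 ≤ a') (hb' : 0 ≤ b') (hc' : 0 ≤ c')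
    (ha : 0 ≤ a) (hb : 0 ≤ b) (hc : 0 ≤ c)
    (h1 : a ≤ a' + b' + c' + 1) (h2 : b ≤ b' + 1) (h3 : c ≤ c' + 1) :
    1 + b ^ 2 + a ^ 2 + c ^ 2 ≤ 11 * (1 + b' ^ 2 + a' ^ 2 + c' ^ 2) := by
  nlinarith [sq_nonneg (a' - b'), sq_nonneg (a' - c'), sq_nonneg (b' - c'),
    sq_nonneg (a' - 1), sq_nonneg (b' - 1), sq_nonneg (c' - 1), mul_le_mul h1 h1 ha (by positivity),
    mul_le_mul h2 h2 hb (by positivity), mul_le_mul h3 h3 hc (by positivity)]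

lemma B_bound (v η v' η' : EuclideanSpace ℝ (Fin 3)) (hv : ‖v - v'‖ ≤ 1) (hη : ‖η - η'‖ ≤ 1) :
    1 + ‖η‖ ^ 2 + ‖cross v η‖ ^ 2 + ‖v‖ ^ 2 ≤
      11 * (1 + ‖η'‖ ^ 2 + ‖cross v' η'‖ ^ 2 + ‖v'‖ ^ 2) := by
  have tri : ‖cross v η‖ ≤ ‖cross v' η'‖ + ‖cross (v - v') η‖ + ‖cross v' (η - η')‖ := by
    rw [cross_decomp v η v' η']; exact norm_add₃_le
  have hb1 : ‖cross (v - v') η‖ ≤ ‖η‖ :=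
    (cross_norm_le _ _).trans (mul_le_of_le_one_left (norm_nonneg η) hv)
  have hb2 : ‖cross v' (η - η')‖ ≤ ‖v'‖ :=
    (cross_norm_le _ _).trans (mul_le_of_le_one_right (norm_nonneg v') hη)
  have hηn : ‖η‖ ≤ ‖η'‖ + 1 := by
    calc ‖η‖ ≤ ‖η - η'‖ + ‖η'‖ := by simpa using norm_add_le (η - η') η'
      _ ≤ ‖η'‖ + 1 := by linarith
  have hvn : ‖v‖ ≤ ‖v'‖ + 1 := by
    calc ‖v‖ ≤ ‖v - v'‖ + ‖v'‖ := by simpa using norm_add_le (v - v') v'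
      _ ≤ ‖v'‖ + 1 := by linarith
  have hc2 : ‖cross v η‖ ≤ ‖cross v' η'‖ + ‖η'‖ + ‖v'‖ + 1 := by linarith
  exact sq_sum_bound (norm_nonneg _) (norm_nonneg _) (norm_nonneg _) (norm_nonneg _)
    (norm_nonneg _) (norm_nonneg _) hc2 hηn hvn

lemma rpow_ratio {A B K t : ℝ} (hA : 0 < A) (hB : 0 < B) (hK : 1 ≤ K)
    (h1 : A ≤ K * B) (h2 : B ≤ K * A) : A ^ t ≤ K ^ |t| * B ^ t := by
  have hK0 : (0 : ℝ) < K := lt_of_lt_of_le one_pos hK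
  rcases le_or_gt 0 t with ht | ht
  · rw [abs_of_nonneg ht]
    calc A ^ t ≤ (K * B) ^ t := Real.rpow_le_rpow hA.le h1 ht
      _ = K ^ t * B ^ t := Real.mul_rpow hK0.le hB.le
  · rw [abs_of_neg ht]
    have hKB : K⁻¹ * B ≤ A := by
      rw [inv_mul_le_iff₀ hK0]; exact h2
    have hKB0 : 0 < K⁻¹ * B := by positivity
    calc A ^ t ≤ (K⁻¹ * B) ^ t := Real.rpow_le_rpow_of_nonpos hKB0 hKB ht.le
      _ = K⁻¹ ^ t * B ^ t := Real.mul_rpow (by positivity) hB.le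
      _ = K ^ (-t) * B ^ t := by rw [Real.inv_rpow hK0.le, ← Real.rpow_neg hK0.le]

lemma atilde_pos (γ s : ℝ) (v η : EuclideanSpace ℝ (Fin 3)) : 0 < atilde γ s v η := by
  unfold atilde
  have h1 : (0:ℝ) < 1 + ‖v‖ ^ 2 := by positivity
  have h2 : (0:ℝ) < 1 + ‖η‖ ^ 2 + ‖cross v η‖ ^ 2 + ‖v‖ ^ 2 := by positivity
  exact mul_pos (Real.rpow_pos_of_pos h1 _) (Real.rpow_pos_of_pos h2 _)

lemma atilde_le (γ s : ℝ) (hs0 : 0 ≤ s) (v η v' η' : EuclideanSpace ℝ (Fin 3))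
    (hv : ‖v - v'‖ ≤ 1) (hη : ‖η - η'‖ ≤ 1) :
    atilde γ s v η ≤ (3 ^ (|γ| / 2) * 11 ^ s) * atilde γ s v' η' := by
  have hvn : ‖v‖ ≤ ‖v'‖ + 1 := by
    calc ‖v‖ ≤ ‖v - v'‖ + ‖v'‖ := by simpa using norm_add_le (v - v') v'
      _ ≤ ‖v'‖ + 1 := by linarith
  have hvn' : ‖v'‖ ≤ ‖v‖ + 1 := by
    calc ‖v'‖ ≤ ‖v' - v‖ + ‖v‖ := by simpa using norm_add_le (v' - v) v
      _ ≤ ‖v‖ + 1 := by rw [norm_sub_rev]; linarith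
  have hA : (0:ℝ) < 1 + ‖v‖ ^ 2 := by positivity
  have hA' : (0:ℝ) < 1 + ‖v'‖ ^ 2 := by positivity
  have h1 : 1 + ‖v‖ ^ 2 ≤ 3 * (1 + ‖v'‖ ^ 2) := by
    nlinarith [norm_nonneg v, norm_nonneg v', sq_nonneg (‖v'‖ - 1),
      mul_le_mul hvn hvn (norm_nonneg v) (by positivity)]
  have h2 : 1 + ‖v'‖ ^ 2 ≤ 3 * (1 + ‖v‖ ^ 2) := by
    nlinarith [norm_nonneg v, norm_nonneg v', sq_nonneg (‖v‖ - 1),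
      mul_le_mul hvn' hvn' (norm_nonneg v') (by positivity)]
  have f1 : (1 + ‖v‖ ^ 2) ^ (γ / 2) ≤ 3 ^ (|γ| / 2) * (1 + ‖v'‖ ^ 2) ^ (γ / 2) := by
    have := rpow_ratio (t := γ / 2) hA hA' (by norm_num) h1 h2
    rwa [abs_div, abs_two] at this
  have hB : (0:ℝ) < 1 + ‖η‖ ^ 2 + ‖cross v η‖ ^ 2 + ‖v‖ ^ 2 := by positivity
  have hB' : (0:ℝ) < 1 + ‖η'‖ ^ 2 + ‖cross v' η'‖ ^ 2 + ‖v'‖ ^ 2 := by positivity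
  have f2 : (1 + ‖η‖ ^ 2 + ‖cross v η‖ ^ 2 + ‖v‖ ^ 2) ^ s ≤
      11 ^ s * (1 + ‖η'‖ ^ 2 + ‖cross v' η'‖ ^ 2 + ‖v'‖ ^ 2) ^ s := by
    calc (1 + ‖η‖ ^ 2 + ‖cross v η‖ ^ 2 + ‖v‖ ^ 2) ^ s
        ≤ (11 * (1 + ‖η'‖ ^ 2 + ‖cross v' η'‖ ^ 2 + ‖v'‖ ^ 2)) ^ s :=
          Real.rpow_le_rpow hB.le (B_bound v η v' η' hv hη) hs0
      _ = 11 ^ s * (1 + ‖η'‖ ^ 2 + ‖cross v' η'‖ ^ 2 + ‖v'‖ ^ 2) ^ s :=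
          Real.mul_rpow (by norm_num) hB'.le
  unfold atilde
  calc (1 + ‖v‖ ^ 2) ^ (γ / 2) * (1 + ‖η‖ ^ 2 + ‖cross v η‖ ^ 2 + ‖v‖ ^ 2) ^ s
      ≤ (3 ^ (|γ| / 2) * (1 + ‖v'‖ ^ 2) ^ (γ / 2)) *
        (11 ^ s * (1 + ‖η'‖ ^ 2 + ‖cross v' η'‖ ^ 2 + ‖v'‖ ^ 2) ^ s) := by
        apply mul_le_mul f1 f2 (Real.rpow_pos_of_pos hB _).le
        positivity
    _ = (3 ^ (|γ| / 2) * 11 ^ s) *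
        ((1 + ‖v'‖ ^ 2) ^ (γ / 2) * (1 + ‖η'‖ ^ 2 + ‖cross v' η'‖ ^ 2 + ‖v'‖ ^ 2) ^ s) := by
        ring

/-- Slow variation of the weight `ã`: there are `δ > 0` and `C ≥ 1` such that
`|X−Y| ≤ δ` implies `C⁻¹ ã(Y) ≤ ã(X) ≤ C ã(Y)`. -/
theorem atilde_slowly_varying (γ s : ℝ) (hs : s ∈ Set.Ioo (0 : ℝ) 1) :
    ∃ δ > (0 : ℝ), ∃ C : ℝ, 1 ≤ C ∧ ∀ v η v' η' : EuclideanSpace ℝ (Fin 3),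
      ‖v - v'‖ ^ 2 + ‖η - η'‖ ^ 2 ≤ δ ^ 2 →
      C⁻¹ * atilde γ s v' η' ≤ atilde γ s v η ∧ atilde γ s v η ≤ C * atilde γ s v' η' := by
  obtain ⟨hs0, _⟩ := hs
  refine ⟨1, one_pos, 3 ^ (|γ| / 2) * 11 ^ s, ?_, ?_⟩
  · have g1 : (1:ℝ) ≤ 3 ^ (|γ| / 2) := Real.one_le_rpow (by norm_num) (by positivity)
    have g2 : (1:ℝ) ≤ 11 ^ s := Real.one_le_rpow (by norm_num) hs0.le
    nlinarith
  · intro v η v' η' h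
    have hC : (0:ℝ) < 3 ^ (|γ| / 2) * 11 ^ s := by
      have := Real.rpow_pos_of_pos (show (0:ℝ) < 3 by norm_num) (|γ| / 2)
      have := Real.rpow_pos_of_pos (show (0:ℝ) < 11 by norm_num) s
      positivity
    rw [one_pow] at h
    have hv : ‖v - v'‖ ≤ 1 := by nlinarith [norm_nonneg (v - v'), sq_nonneg ‖η - η'‖]
    have hη : ‖η - η'‖ ≤ 1 := by nlinarith [norm_nonneg (η - η'), sq_nonneg ‖v - v'‖]
    constructor
    · rw [inv_mul_le_iff₀ hC]
      exact atilde_le γ s hs0.le v' η' v η (by rwa [norm_sub_rev]) (by rwa [norm_sub_rev])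
    · exact atilde_le γ s hs0.le v η v' η' hv hη
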